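/- Let c₀ be the sharp sub-Gaussian comparison constant and let a > √(2 log 2) be the associated parameter with H(a) = B. Define R(u) = Φ̄(u/c₀) / (2·e^{-u²/2}) for u ≥ a. Then R is nondecreasing on [a, ∞). -/

import Mathlib

open MeasureTheory Real Set

/-- The standard normal density `φ(x) = (2π)^{-1/2} e^{-x²/2}`. -/
noncomputable def stdNormalPDF (x : ℝ) : ℝ :=
  (Real.sqrt (2 * Real.pi))⁻¹ * Real.exp (-x ^ 2 / 2)

/-- The Gaussian tail `Φ̄(x) = ∫_x^∞ φ(t) dt`. -/
noncomputable def gaussTail (x : ℝ) : ℝ := ∫ t in Set.Ioi x, stdNormalPDF t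

/-- `B = t₀/2 + ∫_{t₀}^∞ e^{-t²/2} dt` with `t₀ = √(2 log 2)`. -/
noncomputable def Bconst : ℝ :=
  Real.sqrt (2 * Real.log 2) / 2 +
    ∫ t in Set.Ioi (Real.sqrt (2 * Real.log 2)), Real.exp (-t ^ 2 / 2)

/-- `H(x) = 2x e^{-x²/2} + 2 ∫_x^∞ e^{-t²/2} dt`. -/
noncomputable def Hfun (x : ℝ) : ℝ :=
  2 * x * Real.exp (-x ^ 2 / 2) + 2 * ∫ t in Set.Ioi x, Real.exp (-t ^ 2 / 2)

section Aux
open Filter Topology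

lemma integrable_expsq : Integrable (fun t : ℝ => Real.exp (-t ^ 2 / 2)) := by
  have h := integrable_exp_neg_mul_sq (by norm_num : (0:ℝ) < 1/2)
  convert h using 2 with t
  ring_nf

lemma continuous_expsq : Continuous (fun t : ℝ => Real.exp (-t ^ 2 / 2)) := by
  continuity

lemma hasDerivAt_expsq (x : ℝ) :
    HasDerivAt (fun t : ℝ => Real.exp (-t ^ 2 / 2)) (-x * Real.exp (-x ^ 2 / 2)) x := by
  have h : HasDerivAt (fun t : ℝ => -t ^ 2 / 2) (-x) x := by
    have := (hasDerivAt_pow 2 x).neg.div_const 2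
    exact this.congr_deriv (by ring)
  exact (Real.hasDerivAt_exp _).comp x h |>.congr_deriv (by ring)

lemma tendsto_expsq : Tendsto (fun t : ℝ => Real.exp (-t ^ 2 / 2)) atTop (𝓝 0) := by
  apply Real.tendsto_exp_atBot.comp
  have : Tendsto (fun t : ℝ => t ^ 2 / 2) atTop atTop := by
    exact (tendsto_pow_atTop (by norm_num)).atTop_div_const (by norm_num)
  have h2 : Tendsto (fun t : ℝ => -(t ^ 2 / 2)) atTop atBot := tendsto_neg_atTop_atBot.comp this
  convert h2 using 2 with t
  ring


lemma tail_eq {g : ℝ → ℝ} (hgi : Integrable g) (x : ℝ) :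
    (∫ t in Set.Ioi x, g t) = (∫ t in Set.Ioi (0:ℝ), g t) - ∫ t in (0:ℝ)..x, g t := by
  rcases le_or_gt 0 x with h | h
  · rw [intervalIntegral.integral_of_le h]
    rw [← Set.Ioc_union_Ioi_eq_Ioi h,
      MeasureTheory.setIntegral_union (Set.Ioc_disjoint_Ioi le_rfl) measurableSet_Ioi
        hgi.integrableOn hgi.integrableOn]
    ring
  · rw [intervalIntegral.integral_of_ge h.le]
    rw [← Set.Ioc_union_Ioi_eq_Ioi h.le,
      MeasureTheory.setIntegral_union (Set.Ioc_disjoint_Ioi le_rfl) measurableSet_Ioi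
        hgi.integrableOn hgi.integrableOn]
    ring

lemma tail_hasDerivAt {g : ℝ → ℝ} (hg : Continuous g) (hgi : Integrable g) (x : ℝ) :
    HasDerivAt (fun y => ∫ t in Set.Ioi y, g t) (-g x) x := by
  have h1 : HasDerivAt (fun y : ℝ => ∫ t in (0:ℝ)..y, g t) (g x) x :=
    intervalIntegral.integral_hasDerivAt_right (hg.intervalIntegrable _ _)
      hg.aestronglyMeasurable.stronglyMeasurableAtFilter hg.continuousAt
  have h2 := h1.const_sub (∫ t in Set.Ioi (0:ℝ), g t)
  refine h2.congr_of_eventuallyEq (Filter.Eventually.of_forall fun y => ?_) |>.congr_deriv rfl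
  exact tail_eq hgi y

lemma integrableOn_mul_expsq {x : ℝ} (hx : 0 < x) :
    IntegrableOn (fun t : ℝ => t * Real.exp (-t ^ 2 / 2)) (Set.Ioi x) := by
  apply MeasureTheory.integrableOn_Ioi_deriv_of_nonneg
    (g := fun t : ℝ => -Real.exp (-t ^ 2 / 2))
  · exact (continuous_expsq.neg).continuousWithinAt
  · intro t _
    exact (hasDerivAt_expsq t).neg.congr_deriv (by ring)
  · intro t ht
    exact mul_nonneg (hx.trans ht).le (Real.exp_pos _).le
  · simpa using tendsto_expsq.neg

lemma integral_mul_expsq {x : ℝ} (hx : 0 < x) :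
    (∫ t in Set.Ioi x, t * Real.exp (-t ^ 2 / 2)) = Real.exp (-x ^ 2 / 2) := by
  have := MeasureTheory.integral_Ioi_of_hasDerivAt_of_tendsto
    (f := fun t : ℝ => -Real.exp (-t ^ 2 / 2))
    (f' := fun t : ℝ => t * Real.exp (-t ^ 2 / 2)) (a := x) (m := 0)
    (continuous_expsq.neg).continuousWithinAt
    (fun t _ => by exact (hasDerivAt_expsq t).neg.congr_deriv (by ring))
    (integrableOn_mul_expsq hx)
    (by simpa using tendsto_expsq.neg)
  simpa using this

/-- Tail bound: `∫_x^∞ e^{-t²/2} ≤ e^{-x²/2}/x` for `x > 0`. -/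
lemma tail_expsq_le {x : ℝ} (hx : 0 < x) :
    (∫ t in Set.Ioi x, Real.exp (-t ^ 2 / 2)) ≤ Real.exp (-x ^ 2 / 2) / x := by
  have h1 : (∫ t in Set.Ioi x, Real.exp (-t ^ 2 / 2))
      ≤ ∫ t in Set.Ioi x, (t / x) * Real.exp (-t ^ 2 / 2) := by
    apply MeasureTheory.setIntegral_mono_on integrable_expsq.integrableOn
      (((integrableOn_mul_expsq hx).div_const x).congr
        (Filter.Eventually.of_forall fun t => by ring)) measurableSet_Ioi
    intro t ht
    have h2 : (1:ℝ) ≤ t / x := (one_le_div hx).2 (le_of_lt ht)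
    nlinarith [Real.exp_pos (-t^2/2)]
  calc (∫ t in Set.Ioi x, Real.exp (-t ^ 2 / 2))
      ≤ ∫ t in Set.Ioi x, (t / x) * Real.exp (-t ^ 2 / 2) := h1
    _ = (∫ t in Set.Ioi x, t * Real.exp (-t ^ 2 / 2)) / x := by
        rw [← MeasureTheory.integral_div]
        congr 1 with t
        ring
    _ = Real.exp (-x ^ 2 / 2) / x := by rw [integral_mul_expsq hx]

lemma tail_expsq_nonneg (x : ℝ) :
    0 ≤ ∫ t in Set.Ioi x, Real.exp (-t ^ 2 / 2) := by
  apply MeasureTheory.setIntegral_nonneg measurableSet_Ioi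
  intro t _
  exact (Real.exp_pos _).le



lemma stdNormalPDF_pos (x : ℝ) : 0 < stdNormalPDF x := by
  have h : 0 < Real.sqrt (2 * Real.pi) := Real.sqrt_pos.2 (by positivity)
  exact mul_pos (inv_pos.2 h) (Real.exp_pos _)

lemma continuous_stdNormalPDF : Continuous stdNormalPDF :=
  continuous_const.mul continuous_expsq

lemma integrable_stdNormalPDF : Integrable stdNormalPDF :=
  integrable_expsq.const_mul _


lemma hasDerivAt_gaussTail (x : ℝ) : HasDerivAt gaussTail (-stdNormalPDF x) x :=
  tail_hasDerivAt continuous_stdNormalPDF integrable_stdNormalPDF x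

lemma tendsto_stdNormalPDF : Tendsto stdNormalPDF atTop (𝓝 0) := by
  have h := tendsto_expsq.const_mul (Real.sqrt (2 * Real.pi))⁻¹
  rw [mul_zero] at h
  exact h

lemma hasDerivAt_mills (x : ℝ) :
    HasDerivAt (fun t : ℝ => t * stdNormalPDF t / (1 + t ^ 2))
      (stdNormalPDF x * (2 / (1 + x ^ 2) ^ 2 - 1)) x := by
  have hE := hasDerivAt_expsq x
  have h1 : HasDerivAt (fun t : ℝ => t * Real.exp (-t ^ 2 / 2))
      (Real.exp (-x ^ 2 / 2) + x * (-x * Real.exp (-x ^ 2 / 2))) x := by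
    exact ((hasDerivAt_id x).mul hE).congr_deriv (by simp only [id_eq]; ring)
  have h2 : HasDerivAt (fun t : ℝ => 1 + t ^ 2) (2 * x) x := by
    simpa using (hasDerivAt_pow 2 x).const_add 1
  have hne : (1 : ℝ) + x ^ 2 ≠ 0 := by positivity
  have h3 := (h1.div h2 hne).const_mul (Real.sqrt (2 * Real.pi))⁻¹
  have heq : (fun t : ℝ => (Real.sqrt (2 * Real.pi))⁻¹ *
      (t * Real.exp (-t ^ 2 / 2) / (1 + t ^ 2)))
      = fun t : ℝ => t * stdNormalPDF t / (1 + t ^ 2) := by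
    funext t
    unfold stdNormalPDF
    ring
  simp only [Pi.div_apply] at h3
  rw [heq] at h3
  refine h3.congr_deriv ?_
  unfold stdNormalPDF
  field_simp
  ring

lemma mills_integrable {v : ℝ} :
    IntegrableOn (fun t : ℝ => stdNormalPDF t * (2 / (1 + t ^ 2) ^ 2 - 1)) (Set.Ioi v) := by
  apply MeasureTheory.Integrable.mono integrable_stdNormalPDF.integrableOn
  · have hc : Continuous fun t : ℝ => 2 / (1 + t ^ 2) ^ 2 - 1 :=
      (continuous_const.div (by continuity) (fun t => by positivity)).sub continuous_const
    exact ((continuous_stdNormalPDF.mul hc).aestronglyMeasurable).restrict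
  · refine Filter.Eventually.of_forall fun t => ?_
    have h1 : (0:ℝ) < 1 + t ^ 2 := by positivity
    have h2 : (1:ℝ) ≤ (1 + t ^ 2) ^ 2 := by nlinarith
    have h3 : 0 < 2 / (1 + t ^ 2) ^ 2 := by positivity
    have h4 : 2 / (1 + t ^ 2) ^ 2 ≤ 2 := by
      rw [div_le_iff₀ (by positivity)]; nlinarith
    have h5 := (stdNormalPDF_pos t).le
    rw [Real.norm_eq_abs, Real.norm_eq_abs, abs_of_nonneg h5, abs_mul, abs_of_nonneg h5]
    have h6 : |2 / (1 + t ^ 2) ^ 2 - 1| ≤ 1 := by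
      rw [abs_le]; constructor <;> nlinarith
    nlinarith [abs_nonneg (2 / (1 + t ^ 2) ^ 2 - 1)]

lemma tendsto_mills : Tendsto (fun t : ℝ => t * stdNormalPDF t / (1 + t ^ 2)) atTop (𝓝 0) := by
  refine squeeze_zero' ?_ ?_ tendsto_stdNormalPDF
  · filter_upwards [Filter.eventually_ge_atTop (0:ℝ)] with t ht
    have h1 : (0:ℝ) < 1 + t ^ 2 := by positivity
    exact div_nonneg (mul_nonneg ht (stdNormalPDF_pos t).le) h1.le
  · filter_upwards [Filter.eventually_ge_atTop (0:ℝ)] with t ht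
    have h1 : (0:ℝ) < 1 + t ^ 2 := by positivity
    rw [div_le_iff₀ h1]
    nlinarith [(stdNormalPDF_pos t).le, sq_nonneg (t - 1)]

/-- Mills-type lower bound for the Gaussian tail. -/
lemma mills_le {v : ℝ} (hv : 0 ≤ v) :
    v * stdNormalPDF v / (1 + v ^ 2) ≤ gaussTail v := by
  have hFTC := MeasureTheory.integral_Ioi_of_hasDerivAt_of_tendsto
    (f := fun t : ℝ => t * stdNormalPDF t / (1 + t ^ 2))
    (f' := fun t : ℝ => stdNormalPDF t * (2 / (1 + t ^ 2) ^ 2 - 1)) (a := v) (m := 0)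
    (hasDerivAt_mills v).continuousAt.continuousWithinAt
    (fun t _ => hasDerivAt_mills t) mills_integrable tendsto_mills
  have hkey : v * stdNormalPDF v / (1 + v ^ 2)
      = ∫ t in Set.Ioi v, stdNormalPDF t * (1 - 2 / (1 + t ^ 2) ^ 2) := by
    have : (fun t : ℝ => stdNormalPDF t * (1 - 2 / (1 + t ^ 2) ^ 2))
        = fun t : ℝ => -(stdNormalPDF t * (2 / (1 + t ^ 2) ^ 2 - 1)) := by
      funext t; ring
    rw [this, MeasureTheory.integral_neg, hFTC]
    ring
  rw [hkey]
  apply MeasureTheory.setIntegral_mono_on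
    (mills_integrable.neg.congr (Filter.Eventually.of_forall fun t => by
      simp only [Pi.neg_apply]; ring))
    integrable_stdNormalPDF.integrableOn measurableSet_Ioi
  intro t _
  have h3 : 0 < 2 / (1 + t ^ 2) ^ 2 := by positivity
  nlinarith [(stdNormalPDF_pos t).le]



lemma hasDerivAt_Hfun (x : ℝ) :
    HasDerivAt Hfun (-2 * x ^ 2 * Real.exp (-x ^ 2 / 2)) x := by
  have h1 : HasDerivAt (fun t : ℝ => 2 * t * Real.exp (-t ^ 2 / 2))
      (2 * Real.exp (-x ^ 2 / 2) + 2 * x * (-x * Real.exp (-x ^ 2 / 2))) x := by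
    have := ((hasDerivAt_id x).const_mul 2).mul (hasDerivAt_expsq x)
    simp only [id_eq] at this
    exact this.congr_deriv (by ring)
  have h2 := (tail_hasDerivAt continuous_expsq integrable_expsq x).const_mul 2
  have h3 := h1.add h2
  have : Hfun = fun x : ℝ =>
      2 * x * Real.exp (-x ^ 2 / 2) + 2 * ∫ t in Set.Ioi x, Real.exp (-t ^ 2 / 2) := rfl
  rw [this]
  exact h3.congr_deriv (by ring)

lemma strictAntiOn_Hfun : StrictAntiOn Hfun (Set.Ici (0:ℝ)) := by
  apply strictAntiOn_of_deriv_neg (convex_Ici 0)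
  · exact fun x _ => (hasDerivAt_Hfun x).continuousAt.continuousWithinAt
  · intro x hx
    rw [interior_Ici] at hx
    rw [(hasDerivAt_Hfun x).deriv]
    have : (0:ℝ) < x := hx
    nlinarith [mul_pos (mul_pos this this) (Real.exp_pos (-x ^ 2 / 2))]

lemma t0_gt : (1.17:ℝ) < Real.sqrt (2 * Real.log 2) := by
  rw [show (1.17:ℝ) = Real.sqrt (1.17 ^ 2) by
    rw [Real.sqrt_sq (by norm_num)]]
  apply Real.sqrt_lt_sqrt (by norm_num)
  nlinarith [Real.log_two_gt_d9]

lemma t0_lt : Real.sqrt (2 * Real.log 2) < 1.18 := by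
  rw [show (1.18:ℝ) = Real.sqrt (1.18 ^ 2) by
    rw [Real.sqrt_sq (by norm_num)]]
  apply Real.sqrt_lt_sqrt (by positivity)
  nlinarith [Real.log_two_lt_d9]

lemma t0_sq : Real.sqrt (2 * Real.log 2) ^ 2 = 2 * Real.log 2 :=
  Real.sq_sqrt (by positivity)

lemma Bconst_le : Bconst < 1.02 := by
  have ht0 := t0_gt
  have ht1 := t0_lt
  set t₀ := Real.sqrt (2 * Real.log 2) with hdef
  have htpos : (0:ℝ) < t₀ := by linarith
  have h1 : (∫ t in Set.Ioi t₀, Real.exp (-t ^ 2 / 2)) ≤ Real.exp (-t₀ ^ 2 / 2) / t₀ :=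
    tail_expsq_le htpos
  have h2 : Real.exp (-t₀ ^ 2 / 2) = 1 / 2 := by
    rw [t0_sq]
    rw [show -(2 * Real.log 2) / 2 = -Real.log 2 by ring, Real.exp_neg, Real.exp_log] <;>
      norm_num
  rw [h2] at h1
  have h3 : 1 / 2 / t₀ < 1 / 2 / 1.17 := by
    apply div_lt_div_of_pos_left (by norm_num) (by norm_num) ht0
  unfold Bconst
  rw [← hdef]
  have : t₀ / 2 < 0.59 := by linarith
  nlinarith

lemma Hfun_14 : (1.02:ℝ) < Hfun 1.4 := by
  have h1 : (0:ℝ) ≤ ∫ t in Set.Ioi (1.4:ℝ), Real.exp (-t ^ 2 / 2) := tail_expsq_nonneg _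
  have h2 : Real.exp (-(1.4:ℝ) ^ 2 / 2) = (Real.exp 0.98)⁻¹ := by
    rw [show (-(1.4:ℝ) ^ 2 / 2) = -0.98 by norm_num, Real.exp_neg]
  have h3 : Real.exp (0.98:ℝ) < 2.7182818286 := by
    calc Real.exp (0.98:ℝ) ≤ Real.exp 1 := Real.exp_le_exp.2 (by norm_num)
      _ < 2.7182818286 := Real.exp_one_lt_d9
  have h4 : (2.7182818286:ℝ)⁻¹ < (Real.exp 0.98)⁻¹ := by
    apply inv_strictAnti₀ (Real.exp_pos _) h3
  unfold Hfun
  rw [h2]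
  nlinarith


end Aux

set_option maxHeartbeats 1000000

/-- A monotone ratio: with `c₀` the sharp sub-Gaussian comparison constant and `a` the
associated parameter (`a > √(2 log 2)`, `H(a) = B`, `Φ̄(z) = p₀ = 2e^{-a²/2}`,
`c₀ = B/φ(z)`), the function `R(u) = Φ̄(u/c₀)/(2e^{-u²/2})` is nondecreasing on `[a, ∞)`. -/
theorem stmt10
    (a z c₀ : ℝ)
    (ha : Real.sqrt (2 * Real.log 2) < a) (hHa : Hfun a = Bconst)
    (hz : gaussTail z = 2 * Real.exp (-a ^ 2 / 2))
    (hc₀ : c₀ = Bconst / stdNormalPDF z) :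
    MonotoneOn (fun u : ℝ => gaussTail (u / c₀) / (2 * Real.exp (-u ^ 2 / 2)))
      (Set.Ici a) := by
  have ht0 := t0_gt
  have ha0 : (0:ℝ) < a := by linarith
  -- `a ≥ 1.4`
  have ha14 : (1.4:ℝ) ≤ a := by
    by_contra h
    push_neg at h
    have h1 := strictAntiOn_Hfun (Set.mem_Ici.2 ha0.le) (Set.mem_Ici.2 (by norm_num)) h
    rw [hHa] at h1
    linarith [Bconst_le, Hfun_14]
  -- bounds on `Bconst` and `c₀`
  have hB : (0.585:ℝ) < Bconst := by
    have := tail_expsq_nonneg (Real.sqrt (2 * Real.log 2))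
    unfold Bconst
    nlinarith
  have hφzpos := stdNormalPDF_pos z
  have hs : (0:ℝ) < Real.sqrt (2 * Real.pi) := Real.sqrt_pos.2 (by positivity)
  have h5 : Real.sqrt (2 * Real.pi) * stdNormalPDF z ≤ 1 := by
    unfold stdNormalPDF
    rw [← mul_assoc, mul_inv_cancel₀ hs.ne', one_mul]
    exact Real.exp_le_one_iff.2 (by nlinarith [sq_nonneg z])
  have hc : Bconst * Real.sqrt (2 * Real.pi) ≤ c₀ := by
    rw [hc₀, le_div_iff₀ hφzpos]
    nlinarith
  have hc0pos : (0:ℝ) < c₀ := lt_of_lt_of_le (by nlinarith) hc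
  have hc2 : (2.1:ℝ) ≤ c₀ ^ 2 := by
    have h6 : (Bconst * Real.sqrt (2 * Real.pi)) ^ 2 ≤ c₀ ^ 2 := by
      apply pow_le_pow_left₀ (by nlinarith) hc
    rw [mul_pow, Real.sq_sqrt (by positivity : (0:ℝ) ≤ 2 * Real.pi)] at h6
    nlinarith [Real.pi_gt_d6]
  -- derivative of the ratio
  have hF : ∀ u : ℝ, HasDerivAt
      (fun u : ℝ => gaussTail (u / c₀) / (2 * Real.exp (-u ^ 2 / 2)))
      ((-stdNormalPDF (u / c₀) * (1 / c₀) * (2 * Real.exp (-u ^ 2 / 2)) -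
        gaussTail (u / c₀) * (2 * (-u * Real.exp (-u ^ 2 / 2)))) /
        (2 * Real.exp (-u ^ 2 / 2)) ^ 2) u := by
    intro u
    have h1 : HasDerivAt (fun u : ℝ => u / c₀) (1 / c₀) u := by
      simpa using (hasDerivAt_id u).div_const c₀
    have h2 : HasDerivAt (fun u : ℝ => gaussTail (u / c₀))
        (-stdNormalPDF (u / c₀) * (1 / c₀)) u :=
      ((hasDerivAt_gaussTail (u / c₀)).comp u h1 :)
    have h3 : HasDerivAt (fun u : ℝ => 2 * Real.exp (-u ^ 2 / 2))
        (2 * (-u * Real.exp (-u ^ 2 / 2))) u := (hasDerivAt_expsq u).const_mul 2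
    exact h2.div h3 (by positivity)
  apply monotoneOn_of_deriv_nonneg (convex_Ici a)
  · exact fun u _ => (hF u).continuousAt.continuousWithinAt
  · exact fun u _ => (hF u).differentiableAt.differentiableWithinAt
  · intro u hu
    rw [interior_Ici] at hu
    have hua : a < u := hu
    have hupos : (0:ℝ) < u := lt_trans ha0 hua
    rw [(hF u).deriv]
    apply div_nonneg _ (sq_nonneg _)
    have hE : (0:ℝ) < Real.exp (-u ^ 2 / 2) := Real.exp_pos _
    -- key inequality : φ(u/c₀)/c₀ ≤ u * Φ̄(u/c₀)
    have hv : (0:ℝ) ≤ u / c₀ := le_of_lt (div_pos hupos hc0pos)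
    have hm := mills_le hv
    have hφv := stdNormalPDF_pos (u / c₀)
    have hu2 : (1.96:ℝ) ≤ u ^ 2 := by nlinarith
    have hvsq : (u / c₀) ^ 2 = u ^ 2 / c₀ ^ 2 := by ring
    have h1v : (0:ℝ) < 1 + (u / c₀) ^ 2 := by positivity
    have hkey : stdNormalPDF (u / c₀) * (1 / c₀) ≤ u * gaussTail (u / c₀) := by
      have step1 : u * (u / c₀ * stdNormalPDF (u / c₀) / (1 + (u / c₀) ^ 2))
          ≤ u * gaussTail (u / c₀) := by
        apply mul_le_mul_of_nonneg_left hm hupos.le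
      refine le_trans ?_ step1
      rw [← sub_nonneg]
      have hexpand : u * (u / c₀ * stdNormalPDF (u / c₀) / (1 + (u / c₀) ^ 2)) -
          stdNormalPDF (u / c₀) * (1 / c₀)
          = stdNormalPDF (u / c₀) * ((u ^ 2 * c₀ ^ 2 - c₀ ^ 2 - u ^ 2) /
            (c₀ * (c₀ ^ 2 + u ^ 2))) := by
        field_simp
        ring
      rw [hexpand]
      apply mul_nonneg hφv.le
      apply div_nonneg _ (by positivity)
      nlinarith
    nlinarith [hE, hkey]
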